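/- If E[‖Y‖₂²] < ∞ and E[(f(X,Z) − E[f(X,Z)|Z]) (Y − E[Y|Z])ᵀ] = 0 holds for all f ∈ L²(ℝ^{d_X+d_Z}, P_{XZ}), then E[Y | X, Z] = E[Y | Z] almost surely. -/

import Mathlib

open MeasureTheory
open scoped InnerProductSpace

/-- Conditional expectation commutes with continuous linear maps. -/
lemma condexp_clm_comm {α E F : Type*} [NormedAddCommGroup E] [NormedSpace ℝ E] [CompleteSpace E]
    [NormedAddCommGroup F] [NormedSpace ℝ F] [CompleteSpace F]
    {m m0 : MeasurableSpace α} {μ : Measure α} (hm : m ≤ m0) [SigmaFinite (μ.trim hm)]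
    (L : E →L[ℝ] F) {f : α → E} (hf : Integrable f μ) :
    (fun ω => L ((μ[f|m]) ω)) =ᵐ[μ] μ[(fun ω => L (f ω))|m] := by
  refine ae_eq_condExp_of_forall_setIntegral_eq hm (L.integrable_comp hf) ?_ ?_ ?_
  · intro s _ _
    exact (L.integrable_comp integrable_condExp).integrableOn
  · intro s hs hμs
    rw [ContinuousLinearMap.integral_comp_comm L integrable_condExp.integrableOn,
        ContinuousLinearMap.integral_comp_comm L hf.integrableOn,
        setIntegral_condExp hm hf hs]
  · exact (L.continuous.comp_stronglyMeasurable stronglyMeasurable_condExp).aestronglyMeasurable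

/-- If `E[‖Y‖²] < ∞` and `E[(f(X,Z) − E[f(X,Z)|Z])(Y − E[Y|Z])] = 0` for all
`f ∈ L²(P_{XZ})`, then `E[Y | X, Z] = E[Y | Z]` almost surely. -/
theorem stmt_2 {Ω : Type*} [m0 : MeasurableSpace Ω] (μ : Measure Ω) [IsProbabilityMeasure μ]
    {dX dY dZ : ℕ}
    (X : Ω → EuclideanSpace ℝ (Fin dX)) (Y : Ω → EuclideanSpace ℝ (Fin dY))
    (Z : Ω → EuclideanSpace ℝ (Fin dZ))
    (hX : Measurable X) (hY : Measurable Y) (hZ : Measurable Z)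
    (hY2 : MemLp Y 2 μ)
    (h : ∀ f : EuclideanSpace ℝ (Fin dX) × EuclideanSpace ℝ (Fin dZ) → ℝ,
      Measurable f → MemLp f 2 (Measure.map (fun ω => (X ω, Z ω)) μ) →
      ∫ ω, (f (X ω, Z ω)
          - (μ[(fun ω => f (X ω, Z ω)) | MeasurableSpace.comap Z inferInstance]) ω)
          • (Y ω - (μ[Y | MeasurableSpace.comap Z inferInstance]) ω) ∂μ
        = 0) :
    μ[Y | MeasurableSpace.comap (fun ω => (X ω, Z ω)) inferInstance]
      =ᵐ[μ] μ[Y | MeasurableSpace.comap Z inferInstance] := by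
  set mXZ := MeasurableSpace.comap (fun ω => (X ω, Z ω)) inferInstance with hmXZdef
  set mZ := MeasurableSpace.comap Z inferInstance with hmZdef
  letI : MeasurableSpace Ω := m0
  have hXZ : @Measurable Ω _ m0 inferInstance (fun ω => (X ω, Z ω)) := hX.prodMk hZ
  have hmXZ : mXZ ≤ m0 := hXZ.comap_le
  have hmZ : mZ ≤ m0 := hZ.comap_le
  have hZle : mZ ≤ mXZ := by
    rw [hmZdef, hmXZdef]
    have hZeq : Z = Prod.snd ∘ (fun ω => (X ω, Z ω)) := rfl
    calc MeasurableSpace.comap Z inferInstance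
        = (MeasurableSpace.comap Prod.snd inferInstance).comap (fun ω => (X ω, Z ω)) := by
          rw [MeasurableSpace.comap_comp]; rfl
      _ ≤ MeasurableSpace.comap (fun ω => (X ω, Z ω)) inferInstance :=
          MeasurableSpace.comap_mono measurable_snd.comap_le
  have hYint : Integrable Y μ := hY2.integrable (by norm_num)
  set W : Ω → EuclideanSpace ℝ (Fin dY) := fun ω => Y ω - (μ[Y|mZ]) ω with hWdef
  have hWint : Integrable W μ := hYint.sub integrable_condExp
  -- key step: ∫ g • W = 0 for any mZ-strongly-measurable g bounded by 1
  have key : ∀ g : Ω → ℝ, StronglyMeasurable[mZ] g → (∀ᵐ ω ∂μ, ‖g ω‖ ≤ 1) →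
      ∫ ω, g ω • W ω ∂μ = 0 := by
    intro g hg hgb
    have hgm0 : AEStronglyMeasurable g μ := (hg.mono hmZ).aestronglyMeasurable
    have hgW : Integrable (fun ω => g ω • W ω) μ :=
      hWint.smul_of_top_right (memLp_top_of_bound hgm0 1 hgb)
    have hcoord : ∀ i : Fin dY, (∫ ω, g ω • W ω ∂μ) i = 0 := by
      intro i
      set L : EuclideanSpace ℝ (Fin dY) →L[ℝ] ℝ := EuclideanSpace.proj i with hLdef
      have hL : (∫ ω, g ω • W ω ∂μ) i = ∫ ω, L (g ω • W ω) ∂μ :=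
        (ContinuousLinearMap.integral_comp_comm L hgW).symm
      rw [hL]
      have hLs : ∀ ω, L (g ω • W ω) = g ω * L (W ω) := by
        intro ω; rw [_root_.map_smul]; rfl
      simp_rw [hLs]
      -- V := L ∘ W has zero conditional expectation given mZ
      set V : Ω → ℝ := fun ω => L (W ω) with hVdef
      have hVint : Integrable V μ := L.integrable_comp hWint
      have hVcond : μ[V|mZ] =ᵐ[μ] 0 := by
        have hVsub : V = fun ω => L (Y ω) - L ((μ[Y|mZ]) ω) := by
          funext ω; simp [hVdef, hWdef, map_sub]
        have h1 : μ[V|mZ] =ᵐ[μ] μ[(fun ω => L (Y ω))|mZ] - μ[(fun ω => L ((μ[Y|mZ]) ω))|mZ] := by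
          rw [hVsub]
          exact condExp_sub (L.integrable_comp hYint) (L.integrable_comp integrable_condExp) mZ
        have h2 : μ[(fun ω => L ((μ[Y|mZ]) ω))|mZ] = fun ω => L ((μ[Y|mZ]) ω) :=
          condExp_of_stronglyMeasurable hmZ
            (L.continuous.comp_stronglyMeasurable stronglyMeasurable_condExp)
            (L.integrable_comp integrable_condExp)
        have h3 : (fun ω => L ((μ[Y|mZ]) ω)) =ᵐ[μ] μ[(fun ω => L (Y ω))|mZ] :=
          condexp_clm_comm hmZ L hYint
        filter_upwards [h1, h3] with ω hω1 hω3
        have h2' := congrFun h2 ω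
        simp only [Pi.sub_apply, Pi.zero_apply] at *
        linarith
      have hgV : Integrable (fun ω => g ω * V ω) μ := hVint.bdd_mul hgm0 hgb
      calc ∫ ω, g ω * V ω ∂μ = ∫ ω, (μ[(fun ω => g ω * V ω)|mZ]) ω ∂μ :=
            (integral_condExp hmZ).symm
        _ = ∫ ω, g ω * (μ[V|mZ]) ω ∂μ := by
            refine integral_congr_ae ?_
            exact condExp_stronglyMeasurable_mul_of_bound hmZ hg hVint 1 hgb
        _ = 0 := by
            have : (fun ω => g ω * (μ[V|mZ]) ω) =ᵐ[μ] 0 := by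
              filter_upwards [hVcond] with ω hω
              simp [hω]
            rw [integral_congr_ae this]
            simp
    ext i
    simp [hcoord i]
  -- now characterize the conditional expectation
  refine (ae_eq_condExp_of_forall_setIntegral_eq hmXZ hYint
    (fun s _ _ => integrable_condExp.integrableOn) ?_
    ((stronglyMeasurable_condExp.mono hZle).aestronglyMeasurable)).symm
  intro s hs _
  obtain ⟨t, ht, rfl⟩ := hs
  have hsm0 : MeasurableSet[m0] ((fun ω => (X ω, Z ω)) ⁻¹' t) := hXZ ht
  set f : EuclideanSpace ℝ (Fin dX) × EuclideanSpace ℝ (Fin dZ) → ℝ :=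
    t.indicator (fun _ => (1:ℝ)) with hfdef
  have hfm : Measurable f := measurable_const.indicator ht
  haveI : IsProbabilityMeasure (Measure.map (fun ω => (X ω, Z ω)) μ) :=
    Measure.isProbabilityMeasure_map hXZ.aemeasurable
  have hfb : ∀ x, ‖f x‖ ≤ 1 := by
    intro x
    by_cases hx : x ∈ t <;> simp [hfdef, Set.indicator_of_mem, Set.indicator_of_notMem, hx]
  have hf2 : MemLp f 2 (Measure.map (fun ω => (X ω, Z ω)) μ) :=
    (memLp_top_of_bound hfm.aestronglyMeasurable 1 (Filter.Eventually.of_forall hfb)).mono_exponent le_top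
  have h0 := h f hfm hf2
  set s := (fun ω => (X ω, Z ω)) ⁻¹' t with hsdef
  have hfpt : ∀ ω, f (X ω, Z ω) = s.indicator (fun _ => (1:ℝ)) ω := by
    intro ω
    by_cases hω : (X ω, Z ω) ∈ t <;>
      simp [hfdef, hsdef, hω, Set.indicator_of_mem, Set.indicator_of_notMem, Set.mem_preimage]
  have hWpt : ∀ ω, Y ω - (μ[Y|mZ]) ω = W ω := fun ω => rfl
  simp only [hfpt, hWpt] at h0
  set g : Ω → ℝ := μ[s.indicator (fun _ => (1:ℝ))|mZ] with hgdef
  have hindint : Integrable (s.indicator (fun _ => (1:ℝ))) μ := (integrable_const (1:ℝ)).indicator hsm0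
  have hgb : ∀ᵐ ω ∂μ, ‖g ω‖ ≤ 1 := by
    have hg0 : 0 ≤ᵐ[μ] g :=
      condExp_nonneg (Filter.Eventually.of_forall fun ω =>
        Set.indicator_nonneg (fun _ _ => zero_le_one) _)
    have hg1 : g ≤ᵐ[μ] μ[(fun _ => (1:ℝ))|mZ] := by
      refine condExp_mono hindint (integrable_const 1) ?_
      refine Filter.Eventually.of_forall fun ω => ?_
      by_cases hω : ω ∈ s <;>
        simp [hω, Set.indicator_of_mem, Set.indicator_of_notMem]
    have hconst : μ[(fun _ => (1:ℝ))|mZ] = fun _ => (1:ℝ) := condExp_const hmZ 1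
    rw [hconst] at hg1
    filter_upwards [hg0, hg1] with ω h0' h1'
    simp only [Pi.zero_apply] at h0'
    rw [Real.norm_eq_abs, abs_le]
    exact ⟨by linarith, h1'⟩
  have hgW0 : ∫ ω, g ω • W ω ∂μ = 0 := key g stronglyMeasurable_condExp hgb
  have hindW : (fun ω => s.indicator (fun _ => (1:ℝ)) ω • W ω) = s.indicator W := by
    funext ω
    by_cases hω : ω ∈ s <;>
      simp [hω, Set.indicator_of_mem, Set.indicator_of_notMem]
  have hindWint : Integrable (fun ω => s.indicator (fun _ => (1:ℝ)) ω • W ω) μ := by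
    rw [hindW]; exact hWint.indicator hsm0
  have hgWint : Integrable (fun ω => g ω • W ω) μ :=
    hWint.smul_of_top_right
      (memLp_top_of_bound (stronglyMeasurable_condExp.mono hmZ).aestronglyMeasurable 1 hgb)
  have hsplit : ∫ ω, (s.indicator (fun _ => (1:ℝ)) ω - g ω) • W ω ∂μ
      = ∫ ω, s.indicator (fun _ => (1:ℝ)) ω • W ω ∂μ - ∫ ω, g ω • W ω ∂μ := by
    simp_rw [sub_smul]
    exact integral_sub hindWint hgWint
  rw [hsplit, hgW0, sub_zero, hindW, integral_indicator hsm0] at h0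
  have hWsub : ∫ ω in s, W ω ∂μ = ∫ ω in s, Y ω ∂μ - ∫ ω in s, (μ[Y|mZ]) ω ∂μ :=
    integral_sub hYint.integrableOn integrable_condExp.integrableOn
  rw [hWsub] at h0
  rw [sub_eq_zero] at h0
  exact h0.symm
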